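/- arXiv:2509.02857 — 5 statements merged into one kernel-verified Lean document; each statement's English description precedes it below -/
import Mathlib

section
/- Let ω > 0, let z ∈ ℝ with z < ω, and let x ∈ ℝ², x ≠ 0. Define K_{ω,z}(x) := (ω/(4π)) · ∫₀^∞ exp(t·z − (ω/4)·coth(ω t)·‖x‖²) / sinh(ω t) dt (this integral converges). Then π·(1 − z/ω)·K_{ω,z}(x)·exp((ω/4)‖x‖²) ≤ exp(max(z,0)/ω) · ( (1 − z/ω)/(ω‖x‖²) + 1/(2(e − e⁻¹)) ). -/
open MeasureTheory

noncomputable section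

/-- The hyperbolic cotangent. -/
def coth (t : ℝ) : ℝ := Real.cosh t / Real.sinh t

/-- The resolvent kernel of the 2D isotropic harmonic oscillator `P² + (ω²/4)X²`
at spectral parameter `z`, evaluated at `x` (pole at the origin), obtained from
the Mehler heat kernel by a Laplace transform. -/
def Kker (ω z : ℝ) (x : EuclideanSpace ℝ (Fin 2)) : ℝ :=
  (ω / (4 * Real.pi)) *
    ∫ t in Set.Ioi (0 : ℝ),
      Real.exp (t * z - (ω / 4) * coth (ω * t) * ‖x‖ ^ 2) / Real.sinh (ω * t)

namespace KkerAux

open Set Real Filter Topology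

lemma coth_sub_one {s : ℝ} (hs : 0 < s) :
    coth s - 1 = Real.exp (-s) / Real.sinh s := by
  have h := (Real.sinh_pos_iff.mpr hs).ne'
  unfold coth
  rw [div_sub_one h, Real.cosh_sub_sinh]

lemma mul_exp_neg_le {y : ℝ} (_hy : 0 ≤ y) : y * Real.exp (-y) ≤ Real.exp (-1) := by
  have h := Real.add_one_le_exp (y - 1)
  have h2 : y * Real.exp (-y) ≤ Real.exp (y - 1) * Real.exp (-y) :=
    mul_le_mul_of_nonneg_right (by linarith) (Real.exp_pos _).le
  calc y * Real.exp (-y) ≤ Real.exp (y - 1) * Real.exp (-y) := h2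
    _ = Real.exp (-1) := by rw [← Real.exp_add]; ring_nf

lemma aux_small {a s : ℝ} (ha : 0 < a) (hs0 : 0 < s) (hs1 : s ≤ 1) :
    Real.exp (-(a * (coth s - 1))) / Real.sinh s ≤ 1 / a := by
  have hsh := Real.sinh_pos_iff.mpr hs0
  rw [coth_sub_one hs0]
  set v : ℝ := Real.exp (-s) / Real.sinh s with hv
  have hvpos : 0 < v := div_pos (Real.exp_pos _) hsh
  have hsinv : (Real.sinh s)⁻¹ = Real.exp s * v := by
    rw [hv]
    field_simp
    rw [← Real.exp_add]
    simp
  have key : Real.exp (-(a * v)) / Real.sinh s = Real.exp s * (v * Real.exp (-(a * v))) := by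
    rw [div_eq_mul_inv, hsinv]; ring
  rw [key]
  have h1 : v * Real.exp (-(a * v)) ≤ Real.exp (-1) / a := by
    have := mul_exp_neg_le (y := a * v) (by positivity)
    rw [div_eq_mul_inv]
    calc v * Real.exp (-(a * v)) = (a * v * Real.exp (-(a * v))) * a⁻¹ := by
          field_simp
      _ ≤ Real.exp (-1) * a⁻¹ := by
          apply mul_le_mul_of_nonneg_right this (by positivity)
  calc Real.exp s * (v * Real.exp (-(a * v))) ≤ Real.exp 1 * (Real.exp (-1) / a) := by
        apply mul_le_mul (Real.exp_le_exp.mpr hs1) h1 (by positivity) (Real.exp_pos _).le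
    _ = 1 / a := by
        rw [mul_div_assoc']
        rw [← Real.exp_add]; norm_num

lemma integral_exp_neg_mul_Ioi {b : ℝ} (hb : 0 < b) (c : ℝ) :
    ∫ t in Set.Ioi c, Real.exp (-b * t) = Real.exp (-b * c) / b := by
  have hderiv : ∀ x ∈ Set.Ici c, HasDerivAt (fun x => -Real.exp (-b * x) / b)
      (Real.exp (-b * x)) x := by
    intro x _
    simpa [hb.ne'] using ((hasDerivAt_id x).const_mul b).neg.exp.neg.div_const b
  have htend : Tendsto (fun x => -Real.exp (-b * x) / b) atTop (𝓝 0) := by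
    have : Tendsto (fun x => -Real.exp (-b * x) / b) atTop (𝓝 (-0 / b)) := by
      refine Tendsto.div_const (Tendsto.neg ?_) _
      exact Real.tendsto_exp_atBot.comp (tendsto_id.const_mul_atTop_of_neg (by linarith))
    simpa using this
  have := integral_Ioi_of_hasDerivAt_of_tendsto (f := fun x => -Real.exp (-b * x) / b)
    (f' := fun x => Real.exp (-b * x)) (a := c) (m := 0)
    ((hderiv c Set.self_mem_Ici).continuousAt.continuousWithinAt)
    (fun x hx => hderiv x (Set.mem_Ici.mpr (le_of_lt hx)))
    (exp_neg_integrableOn_Ioi c hb) htend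
  rw [this]; ring

lemma arith1 {ω r2 a t0 : ℝ} (hω : 0 < ω) (hr2 : 0 < r2) (ha : a = ω / 4 * r2)
    (ht0 : t0 = 1 / ω) (E q : ℝ) :
    ω / 4 * q * (E / a * t0) = E * (q / (ω * r2)) := by
  subst ha ht0
  field_simp

lemma arith2 {ω z b : ℝ} (hω : 0 < ω) (hz : z < ω) (hb : b = ω - z) (C' X : ℝ) :
    ω / 4 * (1 - z / ω) * (C' * (X / b)) = C' * X / 4 := by
  subst hb
  have h1 : ω ≠ 0 := hω.ne'
  have h2 : ω - z ≠ 0 := by linarith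
  field_simp

lemma arith3 {E1 : ℝ} (h1 : 1 < E1) :
    2 / (1 - E1⁻¹ * E1⁻¹) * E1⁻¹ / 4 = 1 / (2 * (E1 - E1⁻¹)) := by
  have h0 : (0:ℝ) < E1 := by linarith
  have hne : E1 ≠ 0 := h0.ne'
  have hinv : E1⁻¹ < 1 := by rw [inv_lt_one_iff₀]; right; exact h1
  have hinv0 : 0 < E1⁻¹ := by positivity
  have h3 : (1:ℝ) - E1⁻¹ * E1⁻¹ ≠ 0 := by nlinarith
  have h4 : E1 - E1⁻¹ ≠ 0 := by nlinarith
  have hA : (0:ℝ) < -(E1 * 4) + E1 ^ 3 * 4 := by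
    nlinarith [sq_nonneg E1, sq_nonneg (E1 - 1), sq_nonneg (E1 + 1), mul_pos h0 h0]
  have hB : (0:ℝ) < -2 + E1 ^ 2 * 2 := by nlinarith
  field_simp
  have hA2 : ((E1 * E1 - 1) * E1 * 4 : ℝ) ≠ 0 := by nlinarith
  have hB2 : (2 * (E1 * E1 - 1) : ℝ) ≠ 0 := by nlinarith
  ring

lemma arith4 {ω : ℝ} (p q J : ℝ) (hπ : p ≠ 0) (hω : 0 < ω) :
    p * q * (ω / (4 * p) * J) = ω / 4 * q * J := by
  field_simp

end KkerAux

open KkerAux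

set_option maxHeartbeats 1000000 in
/-- Upper bound for the oscillator resolvent kernel. -/
theorem stmt_0 (ω z : ℝ) (hω : 0 < ω) (hz : z < ω)
    (x : EuclideanSpace ℝ (Fin 2)) (hx : x ≠ 0) :
    Real.pi * (1 - z / ω) * Kker ω z x * Real.exp ((ω / 4) * ‖x‖ ^ 2)
      ≤ Real.exp (max z 0 / ω) *
        ((1 - z / ω) / (ω * ‖x‖ ^ 2) + 1 / (2 * (Real.exp 1 - (Real.exp 1)⁻¹))) := by
  have hxn : (0:ℝ) < ‖x‖ := norm_pos_iff.mpr hx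
  have hr2 : (0:ℝ) < ‖x‖ ^ 2 := by positivity
  set a : ℝ := ω / 4 * ‖x‖ ^ 2 with ha_def
  have ha : 0 < a := by rw [ha_def]; positivity
  set b : ℝ := ω - z with hb_def
  have hb : 0 < b := by rw [hb_def]; linarith
  set t0 : ℝ := 1 / ω with ht0_def
  have ht0 : 0 < t0 := by rw [ht0_def]; positivity
  set μ : ℝ := max z 0 / ω with hμ_def
  have hμ0 : 0 ≤ μ := by rw [hμ_def]; positivity
  have he2 : Real.exp (-2) < 1 := by
    rw [show (1:ℝ) = Real.exp 0 by simp]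
    exact Real.exp_lt_exp.mpr (by norm_num)
  have he2' : (0:ℝ) < 1 - Real.exp (-2) := by linarith
  set C : ℝ := 2 / (1 - Real.exp (-2)) with hC_def
  have hC : 0 < C := by rw [hC_def]; exact div_pos two_pos he2'
  set h : ℝ → ℝ := fun t => Real.exp (t * z - a * (coth (ω * t) - 1)) / Real.sinh (ω * t)
    with hh_def
  have hmeas : Measurable h := by
    rw [hh_def]; unfold coth
    fun_prop
  have hsplitfun : ∀ t : ℝ, h t =
      Real.exp (t * z) * (Real.exp (-(a * (coth (ω * t) - 1))) / Real.sinh (ω * t)) := by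
    intro t
    rw [hh_def]
    simp only
    rw [show t * z - a * (coth (ω * t) - 1) = t * z + -(a * (coth (ω * t) - 1)) by ring,
      Real.exp_add, mul_div_assoc]
  -- near bound
  have hb1 : ∀ t ∈ Set.Ioc (0:ℝ) t0, h t ≤ Real.exp μ / a := by
    rintro t ⟨ht1, ht2⟩
    have hs0 : 0 < ω * t := mul_pos hω ht1
    have hs1 : ω * t ≤ 1 := by
      calc ω * t ≤ ω * (1 / ω) := mul_le_mul_of_nonneg_left ht2 hω.le
        _ = 1 := by field_simp
    have h1 : Real.exp (t * z) ≤ Real.exp μ := by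
      apply Real.exp_le_exp.mpr
      rw [hμ_def]
      rcases le_or_gt 0 z with hz0 | hz0
      · rw [max_eq_left hz0]
        calc t * z ≤ (1 / ω) * z := mul_le_mul_of_nonneg_right ht2 hz0
          _ = z / ω := by ring
      · rw [max_eq_right hz0.le]
        have : t * z < 0 := mul_neg_of_pos_of_neg ht1 hz0
        simp only [zero_div]
        linarith
    have h2 := aux_small ha hs0 hs1
    rw [hsplitfun t]
    calc Real.exp (t * z) * (Real.exp (-(a * (coth (ω * t) - 1))) / Real.sinh (ω * t))
        ≤ Real.exp μ * (1 / a) := by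
          apply mul_le_mul h1 h2 _ (Real.exp_pos _).le
          have hsh := Real.sinh_pos_iff.mpr hs0
          positivity
      _ = Real.exp μ / a := by ring
  -- tail bound
  have hb2 : ∀ t ∈ Set.Ioi t0, h t ≤ C * Real.exp (-b * t) := by
    intro t ht
    have ht1 : t0 < t := ht
    have htpos : 0 < t := lt_trans ht0 ht1
    have hu0 : 0 < ω * t := mul_pos hω htpos
    have hu1 : 1 ≤ ω * t := by
      have : ω * t0 = 1 := by rw [ht0_def]; field_simp
      nlinarith
    have hsh := Real.sinh_pos_iff.mpr hu0
    have hw : 0 ≤ coth (ω * t) - 1 := by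
      rw [coth_sub_one hu0]; positivity
    have hexp1 : Real.exp (-(a * (coth (ω * t) - 1))) ≤ 1 := by
      calc Real.exp (-(a * (coth (ω * t) - 1))) ≤ Real.exp 0 :=
            Real.exp_le_exp.mpr (by nlinarith)
        _ = 1 := Real.exp_zero
    have hkey : Real.exp (-(ω * t)) ≤ Real.exp (ω * t) * Real.exp (-2) := by
      rw [← Real.exp_add]
      apply Real.exp_le_exp.mpr
      linarith
    have hsinh_ge : Real.exp (ω * t) * (1 - Real.exp (-2)) / 2 ≤ Real.sinh (ω * t) := by
      rw [Real.sinh_eq]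
      nlinarith
    have hinv : (Real.sinh (ω * t))⁻¹ ≤ C * Real.exp (-(ω * t)) := by
      have hpos : 0 < Real.exp (ω * t) * (1 - Real.exp (-2)) / 2 := by
        have := Real.exp_pos (ω * t)
        nlinarith
      have h1 : (Real.sinh (ω * t))⁻¹ ≤ (Real.exp (ω * t) * (1 - Real.exp (-2)) / 2)⁻¹ :=
        inv_anti₀ hpos hsinh_ge
      have h2 : (Real.exp (ω * t) * (1 - Real.exp (-2)) / 2)⁻¹ = C * Real.exp (-(ω * t)) := by
        rw [hC_def]
        have hne : (1:ℝ) - Real.exp (-2) ≠ 0 := he2'.ne'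
        have hEne : Real.exp (ω * t) ≠ 0 := (Real.exp_pos _).ne'
        simp only [Real.exp_neg]
        field_simp
      linarith
    rw [hsplitfun t]
    have step : Real.exp (-(a * (coth (ω * t) - 1))) / Real.sinh (ω * t)
        ≤ C * Real.exp (-(ω * t)) := by
      rw [div_eq_mul_inv]
      calc Real.exp (-(a * (coth (ω * t) - 1))) * (Real.sinh (ω * t))⁻¹
          ≤ 1 * (C * Real.exp (-(ω * t))) := by
            apply mul_le_mul hexp1 hinv (inv_nonneg.mpr hsh.le) (by norm_num)
        _ = C * Real.exp (-(ω * t)) := by ring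
    have hprod : Real.exp (t * z) * Real.exp (-(ω * t)) = Real.exp (-(ω - z) * t) := by
      rw [← Real.exp_add]
      congr 1
      ring
    calc Real.exp (t * z) * (Real.exp (-(a * (coth (ω * t) - 1))) / Real.sinh (ω * t))
        ≤ Real.exp (t * z) * (C * Real.exp (-(ω * t))) :=
          mul_le_mul_of_nonneg_left step (Real.exp_pos _).le
      _ = C * (Real.exp (t * z) * Real.exp (-(ω * t))) := by ring
      _ = C * Real.exp (-b * t) := by rw [hprod, hb_def]
  -- nonnegativity of h on (0, ∞)
  have hnonneg : ∀ t : ℝ, 0 < t → 0 ≤ h t := by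
    intro t ht
    have hsh := Real.sinh_pos_iff.mpr (mul_pos hω ht)
    rw [hh_def]
    positivity
  -- integrability
  have int1 : IntegrableOn h (Set.Ioc 0 t0) := by
    apply Integrable.mono' (g := fun _ => Real.exp μ / a)
      (integrableOn_const measure_Ioc_lt_top.ne)
      hmeas.aestronglyMeasurable
    filter_upwards [ae_restrict_mem measurableSet_Ioc] with t ht
    rw [Real.norm_eq_abs, abs_of_nonneg (hnonneg t ht.1)]
    exact hb1 t ht
  have int2 : IntegrableOn h (Set.Ioi t0) := by
    apply Integrable.mono' (g := fun t => C * Real.exp (-b * t))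
      ((exp_neg_integrableOn_Ioi t0 hb).const_mul C)
      hmeas.aestronglyMeasurable
    filter_upwards [ae_restrict_mem measurableSet_Ioi] with t ht
    rw [Real.norm_eq_abs, abs_of_nonneg (hnonneg t (lt_trans ht0 ht))]
    exact hb2 t ht
  -- splitting
  have hsplit : ∫ t in Set.Ioi (0:ℝ), h t
      = (∫ t in Set.Ioc 0 t0, h t) + ∫ t in Set.Ioi t0, h t := by
    rw [← Set.Ioc_union_Ioi_eq_Ioi ht0.le]
    exact setIntegral_union (Set.Ioc_disjoint_Ioi le_rfl) measurableSet_Ioi int1 int2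
  -- bounds on the pieces
  have hI1 : ∫ t in Set.Ioc (0:ℝ) t0, h t ≤ Real.exp μ / a * t0 := by
    have := setIntegral_mono_on int1 (integrableOn_const measure_Ioc_lt_top.ne)
      measurableSet_Ioc hb1
    rwa [setIntegral_const, Real.volume_real_Ioc_of_le ht0.le, sub_zero,
      smul_eq_mul, mul_comm] at this
  have hI2 : ∫ t in Set.Ioi t0, h t ≤ C * (Real.exp (-b * t0) / b) := by
    calc ∫ t in Set.Ioi t0, h t ≤ ∫ t in Set.Ioi t0, C * Real.exp (-b * t) :=
          setIntegral_mono_on int2 ((exp_neg_integrableOn_Ioi t0 hb).const_mul C)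
            measurableSet_Ioi hb2
      _ = C * ∫ t in Set.Ioi t0, Real.exp (-b * t) := by rw [integral_const_mul]
      _ = C * (Real.exp (-b * t0) / b) := by rw [integral_exp_neg_mul_Ioi hb t0]
  -- rewrite the LHS
  have hKE : Kker ω z x * Real.exp ((ω / 4) * ‖x‖ ^ 2)
      = (ω / (4 * Real.pi)) * ∫ t in Set.Ioi (0:ℝ), h t := by
    unfold Kker
    rw [mul_assoc, ← integral_mul_const]
    congr 1
    apply integral_congr_ae
    apply Filter.Eventually.of_forall
    intro t
    rw [hh_def]
    simp only
    rw [div_mul_eq_mul_div, ← Real.exp_add]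
    congr 2
    rw [ha_def]; ring
  have hfac : 0 ≤ ω / 4 * (1 - z / ω) := by
    have : z / ω < 1 := (div_lt_one hω).mpr hz
    nlinarith
  have hLHS : Real.pi * (1 - z / ω) * Kker ω z x * Real.exp ((ω / 4) * ‖x‖ ^ 2)
      = ω / 4 * (1 - z / ω) * ∫ t in Set.Ioi (0:ℝ), h t := by
    rw [show Real.pi * (1 - z / ω) * Kker ω z x * Real.exp ((ω / 4) * ‖x‖ ^ 2)
      = Real.pi * (1 - z / ω) * (Kker ω z x * Real.exp ((ω / 4) * ‖x‖ ^ 2)) by ring, hKE]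
    exact arith4 Real.pi (1 - z / ω) _ Real.pi_ne_zero hω
  rw [hLHS]
  have hmain : ω / 4 * (1 - z / ω) * ∫ t in Set.Ioi (0:ℝ), h t
      ≤ ω / 4 * (1 - z / ω) * (Real.exp μ / a * t0 + C * (Real.exp (-b * t0) / b)) := by
    apply mul_le_mul_of_nonneg_left _ hfac
    rw [hsplit]
    exact add_le_add hI1 hI2
  apply le_trans hmain
  rw [mul_add, mul_add]
  apply add_le_add
  · exact le_of_eq (arith1 hω hr2 ha_def ht0_def (Real.exp μ) (1 - z / ω))
  · have hE1 : 1 < Real.exp 1 := by nlinarith [Real.add_one_le_exp 1]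
    have hE1inv : (Real.exp 1)⁻¹ < 1 := by rw [inv_lt_one_iff₀]; right; exact hE1
    have hE1inv0 : (0:ℝ) < (Real.exp 1)⁻¹ := by positivity
    have hden : 0 < Real.exp 1 - (Real.exp 1)⁻¹ := by linarith
    have hbt0 : -b * t0 = z / ω - 1 := by
      rw [hb_def, ht0_def]
      field_simp
      ring
    have hzz : Real.exp (-b * t0) = Real.exp (z / ω) * (Real.exp 1)⁻¹ := by
      rw [hbt0, Real.exp_sub, div_eq_mul_inv]
    have hexp2 : Real.exp (-2) = (Real.exp 1)⁻¹ * (Real.exp 1)⁻¹ := by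
      rw [← Real.exp_neg, ← Real.exp_add]
      norm_num
    have hμle : Real.exp (z / ω) ≤ Real.exp μ := by
      rw [hμ_def]
      apply Real.exp_le_exp.mpr
      gcongr
      exact le_max_left z 0
    calc ω / 4 * (1 - z / ω) * (C * (Real.exp (-b * t0) / b))
        = C * Real.exp (-b * t0) / 4 := arith2 hω hz hb_def C (Real.exp (-b * t0))
      _ = Real.exp (z / ω) * (C * (Real.exp 1)⁻¹ / 4) := by rw [hzz]; ring
      _ = Real.exp (z / ω) * (1 / (2 * (Real.exp 1 - (Real.exp 1)⁻¹))) := by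
          rw [hC_def, hexp2, arith3 hE1]
      _ ≤ Real.exp μ * (1 / (2 * (Real.exp 1 - (Real.exp 1)⁻¹))) := by
          apply mul_le_mul_of_nonneg_right hμle
          exact le_of_lt (div_pos one_pos (by linarith))

end
end

section
/- Let ω > 0, let z ∈ ℝ with z < ω, and let x ∈ ℝ², x ≠ 0. Define K_{ω,z}(x) := (ω/(4π)) · ∫₀^∞ exp(t·z − (ω/4)·coth(ω t)·‖x‖²) / sinh(ω t) dt. Then (1/(2e)) · (1 + (ω/2)‖x‖²)^{−(1/2)(1 − z/ω)} ≤ π·(1 − z/ω)·K_{ω,z}(x)·exp((ω/4)‖x‖²). -/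
open MeasureTheory

noncomputable section

lemma coth_gt_one {s : ℝ} (hs : 0 < s) : 1 < coth s := by
  rw [coth, lt_div_iff₀ (Real.sinh_pos_iff.mpr hs), one_mul]
  exact Real.sinh_lt_cosh s

lemma one_div_sinh_eq {s : ℝ} (hs : 0 < s) :
    1 / Real.sinh s = Real.exp (-s) * (1 + coth s) := by
  have h := Real.sinh_pos_iff.mpr hs
  have hne : Real.sinh s ≠ 0 := ne_of_gt h
  symm
  calc Real.exp (-s) * (1 + coth s)
      = Real.exp (-s) * ((Real.sinh s + Real.cosh s) / Real.sinh s) := by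
        rw [coth]; field_simp
    _ = Real.exp (-s) * (Real.exp s / Real.sinh s) := by rw [Real.sinh_add_cosh]
    _ = 1 / Real.sinh s := by rw [mul_div_assoc', ← Real.exp_add]; simp

lemma coth_sub_one_eq {s : ℝ} (hs : 0 < s) :
    coth s - 1 = Real.exp (-s) / Real.sinh s := by
  have h := Real.sinh_pos_iff.mpr hs
  have hne : Real.sinh s ≠ 0 := ne_of_gt h
  rw [coth, ← Real.cosh_sub_sinh]
  field_simp

lemma mul_exp_neg_le_one {a y : ℝ} (ha : 0 ≤ a) (hy : 0 ≤ y) :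
    a * y * Real.exp (-(a * y)) ≤ 1 := by
  have h1 : a * y ≤ Real.exp (a * y) := by
    have := Real.add_one_le_exp (a * y); linarith
  have hmul : Real.exp (-(a * y)) * Real.exp (a * y) = 1 := by
    rw [← Real.exp_add]; simp
  nlinarith [Real.exp_pos (-(a * y)), Real.exp_pos (a * y)]

lemma int_exp_Ioi {c : ℝ} (T : ℝ) (hc : 0 < c) :
    ∫ t in Set.Ioi T, Real.exp (-(c * t)) = Real.exp (-(c * T)) / c := by
  have h := MeasureTheory.integral_comp_mul_left_Ioi (fun u => Real.exp (-u)) T hc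
  simp only [smul_eq_mul] at h
  rw [h, integral_exp_neg_Ioi]
  ring

/-- Lower bound for the oscillator resolvent kernel. -/
theorem stmt_1 (ω z : ℝ) (hω : 0 < ω) (hz : z < ω)
    (x : EuclideanSpace ℝ (Fin 2)) (hx : x ≠ 0) :
    (1 / (2 * Real.exp 1)) *
        (1 + (ω / 2) * ‖x‖ ^ 2) ^ (-(1 / 2 : ℝ) * (1 - z / ω))
      ≤ Real.pi * (1 - z / ω) * Kker ω z x * Real.exp ((ω / 4) * ‖x‖ ^ 2) := by
  have hr : 0 < ‖x‖ ^ 2 := by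
    have := norm_pos_iff.mpr hx
    positivity
  set a : ℝ := ω / 4 * ‖x‖ ^ 2 with ha_def
  set b : ℝ := ω / 2 * ‖x‖ ^ 2 with hb_def
  have ha : 0 < a := by positivity
  have hb : 0 < b := by positivity
  have hba : b = 2 * a := by rw [ha_def, hb_def]; ring
  set ν : ℝ := 1 - z / ω with hν_def
  have hν : 0 < ν := sub_pos.mpr ((div_lt_one hω).mpr hz)
  have hzw : 0 < ω - z := by linarith
  have hwz : ω - z = ν * ω := by rw [hν_def, sub_mul, div_mul_cancel₀ z hω.ne', one_mul]
  set T : ℝ := Real.log (1 + b) / (2 * ω) with hT_def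
  have h1b : (1:ℝ) < 1 + b := by linarith
  have hT : 0 < T := div_pos (Real.log_pos h1b) (by linarith)
  set f : ℝ → ℝ := fun t =>
    Real.exp (t * z - ω / 4 * coth (ω * t) * ‖x‖ ^ 2) / Real.sinh (ω * t) with hf_def
  -- rewrite f in product form for t > 0
  have hf_eq : ∀ t, 0 < t → f t =
      Real.exp ((z - ω) * t) * ((1 + coth (ω * t)) *
        Real.exp (-(a * coth (ω * t)))) := by
    intro t ht
    have hs : 0 < ω * t := by positivity
    have h1 := one_div_sinh_eq hs
    have hexp : Real.exp (t * z - ω / 4 * coth (ω * t) * ‖x‖ ^ 2) * Real.exp (-(ω * t))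
        = Real.exp ((z - ω) * t) * Real.exp (-(a * coth (ω * t))) := by
      rw [← Real.exp_add, ← Real.exp_add]
      congr 1
      rw [ha_def]; ring
    rw [hf_def]
    simp only
    rw [div_eq_mul_one_div, h1]
    calc Real.exp (t * z - ω / 4 * coth (ω * t) * ‖x‖ ^ 2) *
          (Real.exp (-(ω * t)) * (1 + coth (ω * t)))
        = Real.exp (t * z - ω / 4 * coth (ω * t) * ‖x‖ ^ 2) * Real.exp (-(ω * t)) *
          (1 + coth (ω * t)) := by ring
      _ = Real.exp ((z - ω) * t) * Real.exp (-(a * coth (ω * t))) * (1 + coth (ω * t)) := by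
          rw [hexp]
      _ = Real.exp ((z - ω) * t) * ((1 + coth (ω * t)) * Real.exp (-(a * coth (ω * t)))) := by
          ring
  -- nonnegativity
  have hf_nonneg : ∀ t ∈ Set.Ioi (0:ℝ), 0 ≤ f t := by
    intro t ht
    rw [hf_eq t ht]
    have h1 := coth_gt_one (show 0 < ω * t by exact mul_pos hω ht)
    positivity
  -- upper pointwise bound
  have hf_upper : ∀ t ∈ Set.Ioi (0:ℝ), f t ≤ 2 / a * Real.exp ((z - ω) * t) := by
    intro t ht
    rw [hf_eq t ht]
    have hs : 0 < ω * t := mul_pos hω ht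
    set y := coth (ω * t) with hy_def
    have hy1 : 1 < y := coth_gt_one hs
    have key : (1 + y) * Real.exp (-(a * y)) ≤ 2 / a := by
      have h2 : (1 + y) * Real.exp (-(a * y)) ≤ 2 * y * Real.exp (-(a*y)) := by
        apply mul_le_mul_of_nonneg_right (by linarith) (Real.exp_pos _).le
      have h3 := mul_exp_neg_le_one ha.le (by linarith : (0:ℝ) ≤ y)
      have : 2 * y * Real.exp (-(a*y)) ≤ 2 / a := by
        rw [le_div_iff₀ ha]
        nlinarith [Real.exp_pos (-(a*y))]
      linarith
    rw [mul_comm (2 / a)]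
    apply mul_le_mul_of_nonneg_left key (Real.exp_pos _).le
  -- lower pointwise bound on Ioi T
  have hf_lower : ∀ t ∈ Set.Ioi T,
      2 * Real.exp (-1) * Real.exp (-a) * Real.exp ((z - ω) * t) ≤ f t := by
    intro t ht
    have ht0 : 0 < t := lt_trans hT ht
    have hs : 0 < ω * t := mul_pos hω ht0
    have hsinh : 0 < Real.sinh (ω * t) := Real.sinh_pos_iff.mpr hs
    rw [hf_eq t ht0]
    have hy1 : 1 < coth (ω * t) := coth_gt_one hs
    -- a * (coth s - 1) ≤ 1
    have hkey : a * (coth (ω * t) - 1) ≤ 1 := by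
      rw [coth_sub_one_eq hs]
      rw [← mul_div_assoc, div_le_one hsinh]
      -- a * exp(-s) ≤ sinh s  ⟺  (1+b) exp(-2s) ≤ 1
      have hlog : Real.log (1 + b) ≤ 2 * (ω * t) := by
        have : T ≤ t := le_of_lt ht
        rw [hT_def] at this
        rw [div_le_iff₀ (by linarith : (0:ℝ) < 2 * ω)] at this
        linarith [this]
      have hexp : 1 + b ≤ Real.exp (2 * (ω * t)) := by
        calc 1 + b = Real.exp (Real.log (1 + b)) :=
              (Real.exp_log (by linarith)).symm
          _ ≤ _ := Real.exp_le_exp.mpr hlog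
      have hsinh_eq : Real.sinh (ω * t) =
          (Real.exp (ω * t) - Real.exp (-(ω * t))) / 2 := Real.sinh_eq _
      have he : 0 < Real.exp (-(ω*t)) := Real.exp_pos _
      have he2 : Real.exp (2 * (ω * t)) * Real.exp (-(ω*t)) = Real.exp (ω*t) := by
        rw [← Real.exp_add]; ring_nf
      have : (1 + b) * Real.exp (-(ω*t)) ≤ Real.exp (ω * t) := by
        calc (1 + b) * Real.exp (-(ω*t)) ≤ Real.exp (2*(ω*t)) * Real.exp (-(ω*t)) :=
              mul_le_mul_of_nonneg_right hexp he.le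
          _ = Real.exp (ω*t) := he2
      rw [hsinh_eq]
      rw [hba] at this
      linarith
    -- so exp(-(a * coth s)) ≥ exp(-1) * exp(-a)
    have h2 : Real.exp (-1) * Real.exp (-a) ≤ Real.exp (-(a * coth (ω * t))) := by
      rw [← Real.exp_add]
      apply Real.exp_le_exp.mpr
      nlinarith
    have h3 : (2:ℝ) ≤ 1 + coth (ω * t) := by linarith
    calc 2 * Real.exp (-1) * Real.exp (-a) * Real.exp ((z - ω) * t)
        = Real.exp ((z - ω) * t) * (2 * (Real.exp (-1) * Real.exp (-a))) := by ring
      _ ≤ Real.exp ((z - ω) * t) * ((1 + coth (ω * t)) * Real.exp (-(a * coth (ω * t)))) := by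
          apply mul_le_mul_of_nonneg_left _ (Real.exp_pos _).le
          apply mul_le_mul h3 h2 (by positivity) (by linarith)
  -- measurability of f
  have hf_meas : Measurable f := by
    apply Measurable.div
    · apply Real.measurable_exp.comp
      apply Measurable.sub
      · exact (measurable_id.mul_const z)
      · apply Measurable.mul
        · apply Measurable.mul measurable_const
          exact (Real.measurable_cosh.comp (measurable_const_mul ω)).div
            (Real.measurable_sinh.comp (measurable_const_mul ω))
        · exact measurable_const
    · exact Real.measurable_sinh.comp (measurable_const_mul ω)
  -- integrability of f on Ioi 0
  have hg_int : IntegrableOn (fun t => 2 / a * Real.exp ((z - ω) * t)) (Set.Ioi 0) := by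
    have := (exp_neg_integrableOn_Ioi 0 hzw).const_mul (2 / a)
    simpa [neg_sub, IntegrableOn] using this
  have hf_int : IntegrableOn f (Set.Ioi 0) := by
    apply Integrable.mono hg_int (hf_meas.aestronglyMeasurable.restrict)
    apply (ae_restrict_mem measurableSet_Ioi).mono
    intro t ht
    rw [Real.norm_eq_abs, Real.norm_eq_abs, abs_of_nonneg (hf_nonneg t ht),
      abs_of_nonneg (by positivity)]
    exact hf_upper t ht
  -- the chain of integral inequalities
  have hg2_int : IntegrableOn
      (fun t => 2 * Real.exp (-1) * Real.exp (-a) * Real.exp ((z - ω) * t))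
      (Set.Ioi T) := by
    have := (exp_neg_integrableOn_Ioi T hzw).const_mul (2 * Real.exp (-1) * Real.exp (-a))
    simpa [neg_sub, IntegrableOn] using this
  have step1 : ∫ t in Set.Ioi T, f t ≤ ∫ t in Set.Ioi (0:ℝ), f t := by
    apply setIntegral_mono_set hf_int
    · exact (ae_restrict_mem measurableSet_Ioi).mono hf_nonneg
    · exact HasSubset.Subset.eventuallyLE (Set.Ioi_subset_Ioi hT.le)
  have step2 : ∫ t in Set.Ioi T,
      2 * Real.exp (-1) * Real.exp (-a) * Real.exp ((z - ω) * t) ≤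
      ∫ t in Set.Ioi T, f t := by
    apply setIntegral_mono_on hg2_int (hf_int.mono_set (Set.Ioi_subset_Ioi hT.le))
      measurableSet_Ioi
    exact hf_lower
  have step3 : ∫ t in Set.Ioi T,
      2 * Real.exp (-1) * Real.exp (-a) * Real.exp ((z - ω) * t) =
      2 * Real.exp (-1) * Real.exp (-a) * (Real.exp (-((ω - z) * T)) / (ω - z)) := by
    rw [MeasureTheory.integral_const_mul]
    simp_rw [show ∀ t : ℝ, (z - ω) * t = -((ω - z) * t) from fun t => by ring]
    rw [int_exp_Ioi T hzw]
  -- value of exp(-((ω - z) * T)) as rpow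
  have hrpow : Real.exp (-((ω - z) * T)) = (1 + b) ^ (-(1 / 2 : ℝ) * ν) := by
    rw [Real.rpow_def_of_pos (by linarith : (0:ℝ) < 1 + b)]
    congr 1
    rw [hT_def, hwz]
    field_simp
  -- assemble
  have hIge : 2 * Real.exp (-1) * Real.exp (-a) * ((1 + b) ^ (-(1 / 2 : ℝ) * ν) / (ω - z))
      ≤ ∫ t in Set.Ioi (0:ℝ), f t := by
    rw [← hrpow]
    linarith [step1, step2, step3.le, step3.ge]
  have hK : Kker ω z x = ω / (4 * Real.pi) * ∫ t in Set.Ioi (0:ℝ), f t := rfl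
  have hπ : 0 < Real.pi := Real.pi_pos
  rw [hK]
  have hea : Real.exp (ω / 4 * ‖x‖ ^ 2) = Real.exp a := by rw [ha_def]
  rw [hea]
  have heq : Real.pi * ν * (ω / (4 * Real.pi) * ∫ t in Set.Ioi (0:ℝ), f t) * Real.exp a
      = (ν * ω / 4 * Real.exp a) * ∫ t in Set.Ioi (0:ℝ), f t := by
    field_simp
  show 1 / (2 * Real.exp 1) * (1 + b) ^ (-(1 / 2 : ℝ) * ν)
      ≤ Real.pi * ν * (ω / (4 * Real.pi) * ∫ t in Set.Ioi (0:ℝ), f t) * Real.exp a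
  rw [heq]
  have hcoef : 0 < ν * ω / 4 * Real.exp a := by positivity
  calc 1 / (2 * Real.exp 1) * (1 + b) ^ (-(1 / 2 : ℝ) * ν)
      = (ν * ω / 4 * Real.exp a) *
        (2 * Real.exp (-1) * Real.exp (-a) * ((1 + b) ^ (-(1 / 2 : ℝ) * ν) / (ω - z))) := by
        rw [hwz, Real.exp_neg a, Real.exp_neg 1]
        field_simp
        ring
    _ ≤ (ν * ω / 4 * Real.exp a) * ∫ t in Set.Ioi (0:ℝ), f t :=
        mul_le_mul_of_nonneg_left hIge hcoef.le

end
end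

section
/- For every A > 0 and every b ∈ ℝ, one has ∫₀¹ exp(−A·coth(s) + b·s) / sinh(s) ds ≤ exp(max(b,0)) · exp(−A)/A. -/
open MeasureTheory

noncomputable section

lemma sinh_le_mul_cosh {x : ℝ} (hx : 0 ≤ x) : Real.sinh x ≤ x * Real.cosh x := by
  have key : MonotoneOn (fun t : ℝ => t * Real.cosh t - Real.sinh t) (Set.Ici 0) := by
    have hd : ∀ t : ℝ, HasDerivAt (fun t : ℝ => t * Real.cosh t - Real.sinh t)
        (t * Real.sinh t) t := by
      intro t
      have h1 := ((hasDerivAt_id t).mul (Real.hasDerivAt_cosh t)).sub (Real.hasDerivAt_sinh t)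
      refine h1.congr_deriv ?_
      simp only [id]
      ring
    apply monotoneOn_of_deriv_nonneg (convex_Ici 0)
    · exact (Continuous.continuousOn (by continuity))
    · intro t ht
      exact (hd t).differentiableAt.differentiableWithinAt
    · intro t ht
      rw [interior_Ici] at ht
      rw [(hd t).deriv]
      exact mul_nonneg ht.le (Real.sinh_pos_iff.mpr ht).le
  have := key (Set.self_mem_Ici) hx hx
  simp only [Real.sinh_zero, zero_mul, sub_zero] at this
  linarith

lemma one_div_le_coth {x : ℝ} (hx : 0 < x) : 1 / x ≤ coth x := by
  have hs : 0 < Real.sinh x := Real.sinh_pos_iff.mpr hx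
  rw [coth, div_le_div_iff₀ hx hs, one_mul, mul_comm]
  exact sinh_le_mul_cosh hx.le

/-- Small-`s` part of the Laplace representation of the oscillator resolvent. -/
theorem stmt_2 (A b : ℝ) (hA : 0 < A) :
    ∫ s in Set.Ioo (0 : ℝ) 1, Real.exp (-A * coth s + b * s) / Real.sinh s
      ≤ Real.exp (max b 0) * Real.exp (-A) / A := by
  set C := Real.exp (max b 0) with hC
  have hCpos : 0 < C := Real.exp_pos _
  -- the substitution map
  have hφderiv : ∀ s ∈ Set.Ioo (0:ℝ) 1,
      HasDerivWithinAt (fun s : ℝ => A / s) (-(A / s ^ 2)) (Set.Ioo 0 1) s := by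
    intro s hs
    have hs0 : s ≠ 0 := ne_of_gt hs.1
    have h1 : HasDerivAt (fun s : ℝ => A / s) (A * (-(s ^ 2)⁻¹)) s := by
      simpa [div_eq_mul_inv] using (hasDerivAt_inv hs0).const_mul A
    have : A * (-(s ^ 2)⁻¹) = -(A / s ^ 2) := by ring
    exact (this ▸ h1).hasDerivWithinAt
  have hinj : Set.InjOn (fun s : ℝ => A / s) (Set.Ioo 0 1) := by
    intro x hx y hy h
    have hx0 := hx.1; have hy0 := hy.1
    field_simp at h
    exact h.symm
  have himg : (fun s : ℝ => A / s) '' Set.Ioo 0 1 = Set.Ioi A := by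
    ext u
    simp only [Set.mem_image, Set.mem_Ioo, Set.mem_Ioi]
    constructor
    · rintro ⟨s, ⟨hs0, hs1⟩, rfl⟩
      calc A = A / 1 := by ring
      _ < A / s := by exact div_lt_div_of_pos_left hA hs0 hs1
    · intro hu
      have hu0 : 0 < u := hA.trans hu
      refine ⟨A / u, ⟨div_pos hA hu0, ?_⟩, ?_⟩
      · rw [div_lt_one hu0]; exact hu
      · field_simp
  -- change of variables
  have hsub := integral_image_eq_integral_abs_deriv_smul measurableSet_Ioo hφderiv hinj
      (fun u => Real.exp (-u))
  rw [himg] at hsub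
  have hsubI := (integrableOn_image_iff_integrableOn_abs_deriv_smul measurableSet_Ioo hφderiv hinj
      (fun u => Real.exp (-u)))
  rw [himg] at hsubI
  have hexpI : IntegrableOn (fun u => Real.exp (-u)) (Set.Ioi A) := by
    simpa using exp_neg_integrableOn_Ioi A one_pos
  have hGI : IntegrableOn (fun s => |(-(A / s ^ 2))| • Real.exp (-(A / s))) (Set.Ioo (0:ℝ) 1) :=
    hsubI.mp hexpI
  have hGval : ∫ s in Set.Ioo (0:ℝ) 1, |(-(A / s ^ 2))| • Real.exp (-(A / s)) = Real.exp (-A) := by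
    rw [← hsub, integral_exp_neg_Ioi]
  -- the dominating function
  set g : ℝ → ℝ := fun s => (C / A) * (|(-(A / s ^ 2))| • Real.exp (-(A / s))) with hg
  have hgI : IntegrableOn g (Set.Ioo (0:ℝ) 1) := hGI.const_mul _
  have hgval : ∫ s in Set.Ioo (0:ℝ) 1, g s = C * Real.exp (-A) / A := by
    rw [hg]
    rw [MeasureTheory.integral_const_mul, hGval]
    ring
  rw [← hgval]
  apply integral_mono_of_nonneg
  · rw [Filter.EventuallyLE, ae_restrict_iff' measurableSet_Ioo]
    filter_upwards with s hs
    have h1 : 0 < Real.sinh s := Real.sinh_pos_iff.mpr hs.1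
    positivity
  · exact hgI
  · rw [Filter.EventuallyLE, ae_restrict_iff' measurableSet_Ioo]
    filter_upwards with s hs
    obtain ⟨hs0, hs1⟩ := hs
    have hsinh : 0 < Real.sinh s := Real.sinh_pos_iff.mpr hs0
    have hssinh : s ≤ Real.sinh s := (Real.self_lt_sinh_iff.mpr hs0).le
    have habs : |(-(A / s ^ 2))| = A / s ^ 2 := by
      rw [abs_neg, abs_of_pos (by positivity)]
    have hexp : Real.exp (-A * coth s + b * s) ≤ C * Real.exp (-(A / s)) := by
      rw [hC, ← Real.exp_add]
      apply Real.exp_le_exp.mpr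
      have h1 : -A * coth s ≤ -(A / s) := by
        have h1' := mul_le_mul_of_nonneg_left (one_div_le_coth hs0) hA.le
        rw [mul_one_div] at h1'
        linarith
      have h2 : b * s ≤ max b 0 := by
        rcases le_or_gt b 0 with hb | hb
        · have : b * s ≤ 0 := mul_nonpos_of_nonpos_of_nonneg hb hs0.le
          exact this.trans (le_max_right _ _)
        · have : b * s ≤ b * 1 := by nlinarith
          simpa using this.trans (le_max_left _ _)
      linarith
    have hineq : Real.exp (-A * coth s + b * s) / Real.sinh s
        ≤ C * Real.exp (-(A / s)) / s ^ 2 := by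
      rw [div_le_div_iff₀ hsinh (by positivity)]
      have hs2 : s ^ 2 ≤ s := by nlinarith
      have hepos : (0:ℝ) < Real.exp (-A * coth s + b * s) := Real.exp_pos _
      nlinarith [mul_pos hCpos (Real.exp_pos (-(A / s)))]
    have hgs : g s = C * Real.exp (-(A / s)) / s ^ 2 := by
      rw [hg]
      simp only [smul_eq_mul, habs]
      field_simp
    rw [hgs]
    exact hineq

end
end

section
/- For every a > 0 and every c > 0, one has ∫₀^∞ exp(−a/(e^{2s} − 1) − c·s) ds ≥ (1/(e·c)) · (1 + a)^{−c/2}. -/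
open MeasureTheory

noncomputable section

lemma integral_exp_neg_mul_Ioi' {b : ℝ} (hb : 0 < b) (a : ℝ) :
    (∫ x in Set.Ioi a, Real.exp (-b * x)) = Real.exp (-b * a) / b := by
  have h : ∀ x ∈ Set.Ici a, HasDerivAt (fun x => -Real.exp (-b * x) / b)
      (Real.exp (-b * x)) x := by
    intro x _
    have : HasDerivAt (fun x => -b * x) (-b) x := by
      simpa using (hasDerivAt_id x).const_mul (-b)
    have := (this.exp).neg.div_const b
    convert this using 1
    exacts [rfl, rfl, rfl, by field_simp]
  have htend : Filter.Tendsto (fun x => -Real.exp (-b * x) / b) Filter.atTop (nhds 0) := by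
    have hmul : Filter.Tendsto (fun x : ℝ => b * x) Filter.atTop Filter.atTop :=
      Filter.Tendsto.const_mul_atTop hb Filter.tendsto_id
    have hcomp := Real.tendsto_exp_neg_atTop_nhds_zero.comp hmul
    have : Filter.Tendsto (fun x : ℝ => Real.exp (-b * x)) Filter.atTop (nhds 0) :=
      hcomp.congr (fun x => by simp [Function.comp, neg_mul])
    simpa using (this.neg).div_const b
  have := MeasureTheory.integral_Ioi_of_hasDerivAt_of_tendsto
    (f := fun x => -Real.exp (-b * x) / b) (f' := fun x => Real.exp (-b * x))
    (Continuous.continuousWithinAt (by continuity)) (fun x hx => h x (Set.mem_of_mem_of_subset hx Set.Ioi_subset_Ici_self))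
    ((exp_neg_integrableOn_Ioi a hb)) htend
  rw [this]
  ring

/-- Lower bound for the integral appearing in the lower bound on the
oscillator resolvent kernel. -/
theorem stmt_4 (a c : ℝ) (ha : 0 < a) (hc : 0 < c) :
    (1 / (Real.exp 1 * c)) * (1 + a) ^ (-c / 2 : ℝ)
      ≤ ∫ s in Set.Ioi (0 : ℝ), Real.exp (-a / (Real.exp (2 * s) - 1) - c * s) := by
  set s₀ : ℝ := Real.log (1 + a) / 2 with hs₀def
  have h1a : (0:ℝ) < 1 + a := by linarith
  have hlog : 0 < Real.log (1 + a) := Real.log_pos (by linarith)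
  have hs₀ : 0 < s₀ := by positivity
  set f : ℝ → ℝ := fun s => Real.exp (-a / (Real.exp (2 * s) - 1) - c * s) with hf
  have hfm : Measurable f :=
    Real.measurable_exp.comp
      ((measurable_const.div ((Real.measurable_exp.comp (measurable_id.const_mul 2)).sub
        measurable_const)).sub (measurable_id.const_mul c))
  have hfpos : ∀ s, 0 ≤ f s := fun s => (Real.exp_pos _).le
  have hbound : ∀ s ∈ Set.Ioi (0:ℝ), f s ≤ Real.exp (-c * s) := by
    intro s hs
    apply Real.exp_le_exp.2
    have h1 : (1:ℝ) < Real.exp (2 * s) := by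
      rw [show (1:ℝ) = Real.exp 0 by simp]
      exact Real.exp_lt_exp.2 (by
        have : (0:ℝ) < s := hs
        linarith)
    have hd : 0 ≤ a / (Real.exp (2*s) - 1) := div_nonneg ha.le (by linarith)
    have : -a / (Real.exp (2*s) - 1) = -(a / (Real.exp (2*s) - 1)) := by ring
    rw [this]
    linarith
  have hint0 : IntegrableOn f (Set.Ioi 0) := by
    apply Integrable.mono (exp_neg_integrableOn_Ioi 0 hc) hfm.aestronglyMeasurable
    filter_upwards [ae_restrict_mem measurableSet_Ioi] with s hs
    rw [Real.norm_eq_abs, Real.norm_eq_abs, abs_of_nonneg (hfpos s),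
      abs_of_nonneg (Real.exp_pos _).le]
    exact hbound s hs
  have hints : IntegrableOn f (Set.Ioi s₀) :=
    hint0.mono_set (Set.Ioi_subset_Ioi hs₀.le)
  have hg : IntegrableOn (fun s => Real.exp (-1 - c * s)) (Set.Ioi s₀) := by
    have : (fun s : ℝ => Real.exp (-1 - c * s))
        = fun s => Real.exp (-1) * Real.exp (-c * s) := by
      funext s; rw [← Real.exp_add]; ring_nf
    rw [this]
    exact (exp_neg_integrableOn_Ioi s₀ hc).const_mul _
  have step1 : (∫ s in Set.Ioi s₀, Real.exp (-1 - c * s)) ≤ ∫ s in Set.Ioi s₀, f s := by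
    apply setIntegral_mono_on hg hints measurableSet_Ioi
    intro s hs
    apply Real.exp_le_exp.2
    have h2s : Real.log (1 + a) ≤ 2 * s := by
      have : s₀ < s := hs
      rw [hs₀def] at this; linarith
    have hexp : 1 + a ≤ Real.exp (2 * s) := by
      calc 1 + a = Real.exp (Real.log (1 + a)) := (Real.exp_log h1a).symm
        _ ≤ Real.exp (2 * s) := Real.exp_le_exp.2 h2s
    have hdpos : (0:ℝ) < Real.exp (2 * s) - 1 := by linarith
    have : a / (Real.exp (2 * s) - 1) ≤ 1 := by
      rw [div_le_one hdpos]; linarith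
    have hrw : -a / (Real.exp (2*s) - 1) = -(a / (Real.exp (2*s) - 1)) := by ring
    rw [hrw]
    linarith
  have step2 : (∫ s in Set.Ioi s₀, f s) ≤ ∫ s in Set.Ioi 0, f s := by
    apply setIntegral_mono_set hint0
    · exact Filter.Eventually.of_forall hfpos
    · exact HasSubset.Subset.eventuallyLE (Set.Ioi_subset_Ioi hs₀.le)
  have hval : (∫ s in Set.Ioi s₀, Real.exp (-1 - c * s))
      = (1 / (Real.exp 1 * c)) * (1 + a) ^ (-c / 2 : ℝ) := by
    have h1 : (fun s : ℝ => Real.exp (-1 - c * s))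
        = fun s => Real.exp (-1) * Real.exp (-c * s) := by
      funext s; rw [← Real.exp_add]; ring_nf
    rw [h1, integral_const_mul, integral_exp_neg_mul_Ioi' hc]
    rw [Real.rpow_def_of_pos h1a, Real.exp_neg]
    rw [show Real.log (1 + a) * (-c / 2) = -c * s₀ by rw [hs₀def]; ring]
    field_simp
  calc (1 / (Real.exp 1 * c)) * (1 + a) ^ (-c / 2 : ℝ)
      = ∫ s in Set.Ioi s₀, Real.exp (-1 - c * s) := hval.symm
    _ ≤ ∫ s in Set.Ioi s₀, f s := step1
    _ ≤ ∫ s in Set.Ioi 0, f s := step2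

end
end

section
/- Let λ > 0, a > 0, v∞ > 0, C > 0. Let v : ℝ² → ℝ be measurable with |v(x)| ≤ v∞ for all x and v(x) = 0 whenever ‖x‖ > a. Let φ : ℝ² → ℂ be measurable and satisfy |φ(y)| ≤ C·λ²·exp(−(λ/4)·dist(y, B)²) for all y ∉ B, where B := {y ∈ ℝ² : ‖y‖ ≤ a}. Then for every d ∈ ℝ² with ‖d‖ > a, ( ∫_{ℝ²} |v(x)|²·|φ(x + 2d)|² dx )^{1/2} ≤ √π · a · v∞ · C · λ² · exp(−(λ/4)(2‖d‖ − 2a)²). -/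
open MeasureTheory

noncomputable section

/-- Two-dimensional Euclidean space. -/
abbrev E2 := EuclideanSpace ℝ (Fin 2)

/-- Claim 1 of the eigenvalue-splitting analysis: the `L²` norm of the
right-well potential times the left-well ground state is exponentially small in
the well separation, via the Gaussian decay of the ground state away from the
support of its potential. -/
theorem stmt_14 (lam a vinf C : ℝ) (hlam : 0 < lam) (ha : 0 < a)
    (hvinf : 0 < vinf) (hC : 0 < C)
    (v : E2 → ℝ) (hv : Measurable v) (hvbd : ∀ x, |v x| ≤ vinf)
    (hvsupp : ∀ x : E2, a < ‖x‖ → v x = 0)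
    (φ : E2 → ℂ) (hφ : Measurable φ)
    (hφdecay : ∀ y : E2, y ∉ Metric.closedBall (0 : E2) a →
      ‖φ y‖ ≤ C * lam ^ 2 *
        Real.exp (-(lam / 4) * (Metric.infDist y (Metric.closedBall (0 : E2) a)) ^ 2))
    (d : E2) (hd : a < ‖d‖) :
    Real.sqrt (∫ x : E2, |v x| ^ 2 * ‖φ (x + (2 : ℝ) • d)‖ ^ 2)
      ≤ Real.sqrt Real.pi * a * vinf * C * lam ^ 2
        * Real.exp (-(lam / 4) * (2 * ‖d‖ - 2 * a) ^ 2) := by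
  set B := Metric.closedBall (0 : E2) a with hBdef
  set M := C * lam ^ 2 * Real.exp (-(lam / 4) * (2 * ‖d‖ - 2 * a) ^ 2) with hMdef
  have hMpos : 0 < M := by positivity
  set g : E2 → ℝ := Set.indicator B (fun _ => (vinf * M) ^ 2) with hgdef
  have hgint : Integrable g := by
    refine (integrable_indicator_iff measurableSet_closedBall).2 ?_
    exact integrableOn_const measure_closedBall_lt_top.ne
  have hle : ∀ x, |v x| ^ 2 * ‖φ (x + (2 : ℝ) • d)‖ ^ 2 ≤ g x := by
    intro x
    by_cases hx : x ∈ B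
    · have hxa : ‖x‖ ≤ a := by
        simpa [hBdef, mem_closedBall_zero_iff] using hx
      set y := x + (2 : ℝ) • d with hydef
      have h2d : ‖(2 : ℝ) • d‖ = 2 * ‖d‖ := by
        rw [norm_smul]; simp
      have hynorm : 2 * ‖d‖ - a ≤ ‖y‖ := by
        have h1 : ‖(2 : ℝ) • d‖ ≤ ‖y‖ + ‖x‖ := by
          calc ‖(2 : ℝ) • d‖ = ‖y - x‖ := by rw [hydef]; congr 1; abel
            _ ≤ ‖y‖ + ‖x‖ := norm_sub_le _ _
        linarith [h2d ▸ h1, hxa]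
      have hyB : y ∉ B := by
        rw [hBdef, Metric.mem_closedBall, dist_zero_right, not_le]
        linarith
      have hinf : 2 * ‖d‖ - 2 * a ≤ Metric.infDist y B := by
        by_contra hcon
        push_neg at hcon
        obtain ⟨z, hz, hzlt⟩ := (Metric.infDist_lt_iff ⟨0, by
          simp [hBdef, ha.le]⟩).1 hcon
        have hza : ‖z‖ ≤ a := by simpa [hBdef, mem_closedBall_zero_iff] using hz
        have : ‖y‖ - ‖z‖ ≤ dist y z := by
          simpa [dist_eq_norm] using norm_sub_norm_le y z
        linarith
      have hφbd : ‖φ y‖ ≤ M := by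
        refine (hφdecay y hyB).trans ?_
        rw [hMdef]
        gcongr C * lam ^ 2 * Real.exp ?_
        have h0 : (0:ℝ) ≤ 2 * ‖d‖ - 2 * a := by linarith
        have := pow_le_pow_left₀ h0 hinf 2
        nlinarith [hlam.le]
      have hgx : g x = (vinf * M) ^ 2 := by
        rw [hgdef]; exact Set.indicator_of_mem hx _
      rw [hgx]
      have h1 : |v x| ^ 2 ≤ vinf ^ 2 := by
        have := hvbd x
        nlinarith [abs_nonneg (v x)]
      have h2 : ‖φ y‖ ^ 2 ≤ M ^ 2 := by
        nlinarith [norm_nonneg (φ y)]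
      calc |v x| ^ 2 * ‖φ y‖ ^ 2 ≤ vinf ^ 2 * M ^ 2 := by
            apply mul_le_mul h1 h2 (by positivity) (by positivity)
        _ = (vinf * M) ^ 2 := by ring
    · have hxnorm : a < ‖x‖ := by
        simpa [hBdef, mem_closedBall_zero_iff, not_le] using hx
      have hv0 : v x = 0 := hvsupp x hxnorm
      have : g x = 0 := Set.indicator_of_notMem hx _
      simp [this, hv0]
  have hintle : (∫ x : E2, |v x| ^ 2 * ‖φ (x + (2 : ℝ) • d)‖ ^ 2)
      ≤ ∫ x, g x := by
    refine integral_mono_of_nonneg ?_ hgint ?_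
    · exact Filter.Eventually.of_forall fun x => by positivity
    · exact Filter.Eventually.of_forall hle
  have hvol : ∫ x, g x = (vinf * M) ^ 2 * (Real.pi * a ^ 2) := by
    rw [hgdef, integral_indicator_const _ measurableSet_closedBall,
      measureReal_def, EuclideanSpace.volume_closedBall]
    have hcard : Fintype.card (Fin 2) = 2 := by simp
    rw [hcard]
    have hΓ : Real.Gamma ((2:ℕ) / 2 + 1) = 1 := by
      norm_num [Real.Gamma_two]
    rw [hΓ]
    have hsq : Real.sqrt Real.pi ^ 2 = Real.pi := Real.sq_sqrt Real.pi_pos.le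
    rw [← ENNReal.ofReal_pow ha.le, ← ENNReal.ofReal_mul (by positivity),
      ENNReal.toReal_ofReal (by positivity)]
    rw [hsq]
    simp [smul_eq_mul]
    ring
  have hfinal : (∫ x : E2, |v x| ^ 2 * ‖φ (x + (2 : ℝ) • d)‖ ^ 2)
      ≤ (Real.sqrt Real.pi * a * vinf * M) ^ 2 := by
    have hsq : (Real.sqrt Real.pi * a * vinf * M) ^ 2
        = (vinf * M) ^ 2 * (Real.pi * a ^ 2) := by
      have h := Real.sq_sqrt Real.pi_pos.le
      calc (Real.sqrt Real.pi * a * vinf * M) ^ 2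
          = Real.sqrt Real.pi ^ 2 * (a ^ 2 * vinf ^ 2 * M ^ 2) := by ring
        _ = (vinf * M) ^ 2 * (Real.pi * a ^ 2) := by rw [h]; ring
    rw [hsq, ← hvol]; exact hintle
  have := Real.sqrt_le_sqrt hfinal
  rw [Real.sqrt_sq (by positivity)] at this
  calc Real.sqrt (∫ x : E2, |v x| ^ 2 * ‖φ (x + (2 : ℝ) • d)‖ ^ 2)
      ≤ Real.sqrt Real.pi * a * vinf * M := this
    _ = _ := by rw [hMdef]; ring

end
end
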